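/- Let δ be an ordinal, d ≥ 3, and N = 2(d−1). Suppose u₁, …, u_N are nonzero vectors of ℝ^d and D ⊆ ℝ^d has nonempty interior. If A₁, …, A_N cover D and for all p ∈ ℝ^d and all 1 ≤ i ≤ N the set H_{u_i}(p) ∩ A_i has cardinality < ℵ_δ, then 2^ℵ₀ ≤ ℵ_δ. -/

import Mathlib

open Cardinal

/-- `Hplane u p` is the hyperplane through `p` orthogonal to `u`. -/
def Hplane {d : ℕ} (u p : EuclideanSpace ℝ (Fin d)) : Set (EuclideanSpace ℝ (Fin d)) :=
  {x | (inner ℝ (x - p) u : ℝ) = 0}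

private lemma mk_fin_iUnion_lt {α : Type} {κ : Cardinal} (hκ : ℵ₀ ≤ κ) {n : ℕ}
    (s : Fin n → Set α) (h : ∀ i, Cardinal.mk (s i) < κ) : Cardinal.mk (⋃ i, s i) < κ := by
  induction n with
  | zero => simpa using lt_of_lt_of_le aleph0_pos hκ
  | succ n ih =>
    have he : (⋃ i, s i) = s 0 ∪ ⋃ i : Fin n, s i.succ := by
      ext x; simp [Fin.exists_fin_succ]
    rw [he]
    exact lt_of_le_of_lt (Cardinal.mk_union_le _ _)
      (Cardinal.add_lt_of_lt hκ (h 0) (ih _ fun i => h i.succ))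

private lemma exists_orth {d m : ℕ} (hm : m < d) (v : Fin m → EuclideanSpace ℝ (Fin d)) :
    ∃ b : EuclideanSpace ℝ (Fin d), b ≠ 0 ∧ ∀ i, (inner ℝ (v i) b : ℝ) = 0 := by
  classical
  set K : Submodule ℝ (EuclideanSpace ℝ (Fin d)) := Submodule.span ℝ (Set.range v)
  have hK : Module.finrank ℝ K ≤ m := by
    refine le_trans (finrank_span_le_card _) ?_
    rw [Set.toFinset_range]
    exact le_trans (Finset.card_image_le) (by simp)
  have hne : Kᗮ ≠ ⊥ := by
    intro hbot
    have := Submodule.finrank_add_finrank_orthogonal K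
    rw [hbot] at this
    simp [finrank_euclideanSpace_fin] at this
    omega
  obtain ⟨b, hbK, hb0⟩ := Submodule.ne_bot_iff _ |>.1 hne
  exact ⟨b, hb0, fun i => (Submodule.mem_orthogonal K b).1 hbK _ (Submodule.subset_span ⟨i, rfl⟩)⟩

theorem stmt11 (δ : Ordinal) (d : ℕ) (hd : 3 ≤ d)
    (u : Fin (2 * (d - 1)) → EuclideanSpace ℝ (Fin d))
    (hu : ∀ i, u i ≠ 0)
    (D : Set (EuclideanSpace ℝ (Fin d))) (hD : (interior D).Nonempty)
    (A : Fin (2 * (d - 1)) → Set (EuclideanSpace ℝ (Fin d)))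
    (hcover : D ⊆ ⋃ i, A i)
    (hA : ∀ (p : EuclideanSpace ℝ (Fin d)) (i : Fin (2 * (d - 1))),
      Cardinal.mk (Hplane (u i) p ∩ A i : Set (EuclideanSpace ℝ (Fin d))) < aleph δ) :
    continuum ≤ aleph δ := by
  by_contra hcon
  push_neg at hcon
  have hκ0 : ℵ₀ ≤ aleph δ := aleph0_le_aleph δ
  -- a ball inside D
  obtain ⟨x₀, hx₀⟩ := hD
  obtain ⟨r, hr, hball⟩ := Metric.isOpen_iff.1 isOpen_interior x₀ hx₀
  have hballD : Metric.ball x₀ r ⊆ D := hball.trans interior_subset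
  have hdd : d - 1 < d := by omega
  -- two auxiliary orthogonal vectors
  obtain ⟨a, ha0, haorth⟩ := exists_orth hdd
    (fun j : Fin (d - 1) => u ⟨j.val, by have := j.isLt; omega⟩)
  obtain ⟨b, hb0, hborth⟩ := exists_orth hdd
    (fun j : Fin (d - 1) => u ⟨d - 1 + j.val, by have := j.isLt; omega⟩)
  have haorth' : ∀ i : Fin (2 * (d - 1)), i.val < d - 1 → (inner ℝ (u i) a : ℝ) = 0 := by
    intro i hi
    have h1 := haorth ⟨i.val, hi⟩
    have h2 : u i = u ⟨i.val, i.isLt⟩ := congrArg u (Fin.ext rfl)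
    rw [h2]; exact h1
  have hborth' : ∀ i : Fin (2 * (d - 1)), d - 1 ≤ i.val → (inner ℝ (u i) b : ℝ) = 0 := by
    intro i hi
    have h1 := hborth ⟨i.val - (d - 1), by have := i.isLt; omega⟩
    have h2 : u i = u ⟨d - 1 + (i.val - (d - 1)), by have := i.isLt; omega⟩ :=
      congrArg u (Fin.ext (show i.val = d - 1 + (i.val - (d - 1)) by omega))
    rw [h2]; exact h1
  -- scaling
  set ε : ℝ := r / (‖a‖ + ‖b‖ + 1) with hεdef
  have hε : 0 < ε := div_pos hr (by positivity)
  set a' : EuclideanSpace ℝ (Fin d) := ε • a with ha'def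
  set b' : EuclideanSpace ℝ (Fin d) := ε • b with hb'def
  have ha'0 : a' ≠ 0 := smul_ne_zero (ne_of_gt hε) ha0
  have hb'0 : b' ≠ 0 := smul_ne_zero (ne_of_gt hε) hb0
  set g : ℝ → ℝ → EuclideanSpace ℝ (Fin d) := fun s t => x₀ + (s • a' + t • b') with hg
  -- the grid lies in the ball
  have hgball : ∀ s t : ℝ, s ∈ Set.Icc (0:ℝ) 1 → t ∈ Set.Icc (0:ℝ) 1 →
      g s t ∈ Metric.ball x₀ r := by
    intro s t hs ht
    rw [Metric.mem_ball, dist_eq_norm]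
    have h1 : g s t - x₀ = s • a' + t • b' := by rw [hg]; exact add_sub_cancel_left _ _
    rw [h1]
    have key : ∀ (x : EuclideanSpace ℝ (Fin d)) (c : ℝ), c ∈ Set.Icc (0:ℝ) 1 → ‖c • x‖ ≤ ‖x‖ := by
      intro x c hc
      rw [norm_smul, Real.norm_eq_abs, abs_of_nonneg hc.1]
      nlinarith [norm_nonneg x, hc.2, hc.1]
    have h2 : ‖s • a' + t • b'‖ ≤ ‖a'‖ + ‖b'‖ :=
      le_trans (norm_add_le _ _) (add_le_add (key a' s hs) (key b' t ht))
    refine lt_of_le_of_lt h2 ?_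
    have hna : ‖a'‖ = ε * ‖a‖ := by
      rw [ha'def, norm_smul, Real.norm_eq_abs, abs_of_pos hε]
    have hnb : ‖b'‖ = ε * ‖b‖ := by
      rw [hb'def, norm_smul, Real.norm_eq_abs, abs_of_pos hε]
    have hpos : (0:ℝ) < ‖a‖ + ‖b‖ + 1 := by positivity
    have hcancel : ε * (‖a‖ + ‖b‖ + 1) = r := by
      rw [hεdef]; field_simp
    nlinarith [hε]
  -- injectivity in each variable
  have hinj_t : ∀ s : ℝ, Function.Injective (fun t => g s t) := by
    intro s t t' h
    simp only [hg] at h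
    have h3 : t • b' = t' • b' := by
      have h4 := add_left_cancel h
      exact add_left_cancel h4
    exact smul_left_injective ℝ hb'0 h3
  have hinj_s : ∀ t : ℝ, Function.Injective (fun s => g s t) := by
    intro t s s' h
    simp only [hg] at h
    have h3 : s • a' = s' • a' := by
      have h4 := add_left_cancel h
      exact add_right_cancel h4
    exact smul_left_injective ℝ ha'0 h3
  -- hyperplane memberships
  have hHb : ∀ (i : Fin (2 * (d - 1))), d - 1 ≤ i.val → ∀ s t : ℝ,
      g s t ∈ Hplane (u i) (g s 0) := by
    intro i hi s t
    show (inner ℝ (g s t - g s 0) (u i) : ℝ) = 0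
    have h1 : g s t - g s 0 = t • b' := by rw [hg]; simp
    rw [h1, hb'def, smul_smul, real_inner_smul_left, real_inner_comm, hborth' i hi, mul_zero]
  have hHa : ∀ (i : Fin (2 * (d - 1))), i.val < d - 1 → ∀ s t : ℝ,
      g s t ∈ Hplane (u i) (g 0 t) := by
    intro i hi s t
    show (inner ℝ (g s t - g 0 t) (u i) : ℝ) = 0
    have h1 : g s t - g 0 t = s • a' := by rw [hg]; simp
    rw [h1, ha'def, smul_smul, real_inner_smul_left, real_inner_comm, haorth' i hi, mul_zero]
  -- choose X ⊆ [0,1] of cardinality aleph δ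
  have hIcc : Cardinal.mk (Set.Icc (0:ℝ) 1) = continuum := Cardinal.mk_Icc_real zero_lt_one
  obtain ⟨X, hXsub, hXcard⟩ := Cardinal.le_mk_iff_exists_subset.1
    (show aleph δ ≤ Cardinal.mk (Set.Icc (0:ℝ) 1) by rw [hIcc]; exact hcon.le)
  -- the bad set of parameters t
  set F : ↥X × Fin (2 * (d - 1)) → Set ℝ :=
    fun p => {t : ℝ | d - 1 ≤ p.2.val ∧ g p.1.val t ∈ A p.2} with hF
  have hFlt : ∀ p, Cardinal.mk (F p) < aleph δ := by
    rintro ⟨s, i⟩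
    rcases lt_or_ge i.val (d - 1) with hi | hi
    · have he : F (s, i) = ∅ := by
        ext t; simp only [hF, Set.mem_setOf_eq, Set.mem_empty_iff_false, iff_false]
        rintro ⟨h1, -⟩; omega
      rw [he]
      simpa using lt_of_lt_of_le aleph0_pos hκ0
    · refine lt_of_le_of_lt (Cardinal.mk_le_of_injective (f :=
        fun t : F (s, i) => (⟨g s.val t.val, hHb i hi s.val t.val, t.2.2⟩ :
          (Hplane (u i) (g s.val 0) ∩ A i : Set (EuclideanSpace ℝ (Fin d))))) ?_)
        (hA (g s.val 0) i)
      intro t t' h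
      have h5 := congrArg Subtype.val h
      exact Subtype.ext (hinj_t s.val h5)
  set Bad : Set ℝ := ⋃ p, F p with hBadDef
  have hBadle : Cardinal.mk Bad ≤ aleph δ := by
    refine le_trans (Cardinal.mk_iUnion_le F) ?_
    have h1 : Cardinal.mk (↥X × Fin (2 * (d - 1))) ≤ aleph δ := by
      rw [Cardinal.mk_prod, Cardinal.lift_id, Cardinal.lift_id, hXcard, Cardinal.mk_fin]
      calc aleph δ * ((2 * (d - 1) : ℕ) : Cardinal) ≤ aleph δ * aleph δ :=
            mul_le_mul_right (le_trans (Cardinal.nat_lt_aleph0 _).le hκ0) _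
        _ = aleph δ := Cardinal.mul_eq_self hκ0
    have h2 : (⨆ p, Cardinal.mk (F p)) ≤ aleph δ := ciSup_le' fun p => (hFlt p).le
    calc Cardinal.mk (↥X × Fin (2 * (d - 1))) * ⨆ p, Cardinal.mk (F p)
        ≤ aleph δ * aleph δ := mul_le_mul' h1 h2
      _ = aleph δ := Cardinal.mul_eq_self hκ0
  -- choose a good t₀
  have hnotsub : ¬ (Set.Icc (0:ℝ) 1 ⊆ Bad) := by
    intro hsub
    have hle : continuum ≤ aleph δ := by
      rw [← hIcc]
      exact le_trans (Cardinal.mk_le_mk_of_subset hsub) hBadle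
    exact absurd hle (not_le.2 hcon)
  obtain ⟨t₀, ht₀I, ht₀B⟩ := Set.not_subset.1 hnotsub
  -- the final contradiction
  set Y : Set (EuclideanSpace ℝ (Fin d)) := (fun s => g s t₀) '' X with hY
  have hYcard : Cardinal.mk Y = aleph δ := by
    rw [hY, Cardinal.mk_image_eq (hinj_s t₀)]
    exact hXcard
  have hYsub : Y ⊆ ⋃ i, (Hplane (u i) (g 0 t₀) ∩ A i) := by
    rintro y ⟨s, hsX, rfl⟩
    have hsI : s ∈ Set.Icc (0:ℝ) 1 := hXsub hsX
    have hmem : g s t₀ ∈ D := hballD (hgball s t₀ hsI ht₀I)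
    obtain ⟨Ai, ⟨i, rfl⟩, hi⟩ := hcover hmem
    have hiS : i.val < d - 1 := by
      by_contra hiT
      push_neg at hiT
      exact ht₀B (Set.mem_iUnion.2 ⟨(⟨s, hsX⟩, i), ⟨hiT, hi⟩⟩)
    exact Set.mem_iUnion.2 ⟨i, hHa i hiS s t₀, hi⟩
  have hfin : aleph δ < aleph δ := by
    calc aleph δ = Cardinal.mk Y := hYcard.symm
      _ ≤ Cardinal.mk (⋃ i, (Hplane (u i) (g 0 t₀) ∩ A i)) := Cardinal.mk_le_mk_of_subset hYsub
      _ < aleph δ := mk_fin_iUnion_lt hκ0 _ fun i => hA (g 0 t₀) i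
  exact absurd hfin (lt_irrefl _)
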